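/- arXiv:0912.2523 — 2 statements merged into one kernel-verified Lean document; each statement's English description precedes it below -/
import Mathlib

section
/- With μ_P(M) = binomial(M+P,P) and Q_P as defined recursively (Q_1(x)=x, Q_P(x_1,...,x_P) = μ_P(Σx_k - 1) + Q_{P-1}(x_1,...,x_{P-1})), for any P-tuple of nonnegative integers with sum s, the value Q_P(x_1,...,x_P) lies in the interval [μ_P(s-1), μ_P(s) - 1]. -/
/-- `mu P m = binomial(m+P, P)` for `m ≥ 0`, with `mu P (-1) = 0`. -/
def mu (P : ℕ) (m : ℤ) : ℕ := if m < 0 then 0 else (m.toNat + P).choose P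

/-- The state-embedding map `Q_P`: `Q_1(x_1) = x_1` and
`Q_P(x_1,…,x_P) = μ_P(x_1+⋯+x_P − 1) + Q_{P−1}(x_1,…,x_{P−1})`. -/
def Q : (P : ℕ) → (Fin P → ℕ) → ℕ
  | 0, _ => 0
  | P + 1, x => mu (P + 1) ((∑ i, (x i : ℤ)) - 1) + Q P (fun i => x i.castSucc)

lemma mu_mono (P : ℕ) {a b : ℤ} (h : a ≤ b) : mu P a ≤ mu P b := by
  unfold mu
  split_ifs with h1 h2
  · exact Nat.zero_le _
  · exact Nat.zero_le _
  · omega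
  · exact Nat.choose_le_choose P (by omega)

lemma mu_pos (P : ℕ) {m : ℤ} (h : 0 ≤ m) : 1 ≤ mu P m := by
  unfold mu
  rw [if_neg (by omega)]
  exact Nat.choose_pos (by omega)

lemma mu_pascal (P : ℕ) {m : ℤ} (h : 0 ≤ m) :
    mu (P + 1) m = mu (P + 1) (m - 1) + mu P m := by
  unfold mu
  rcases eq_or_lt_of_le h with h0 | h0
  · rw [if_neg (by omega), if_pos (by omega), if_neg (by omega)]
    simp [← h0]
  · rw [if_neg (by omega), if_neg (by omega), if_neg (by omega)]
    have : m.toNat = (m - 1).toNat + 1 := by omega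
    rw [this]
    have : (m - 1).toNat + 1 + (P + 1) = ((m-1).toNat + (P+1)) + 1 := by ring
    rw [this, Nat.choose_succ_succ ((m-1).toNat + (P+1)) P]
    have harg : (m-1).toNat + 1 + P = (m-1).toNat + (P+1) := by ring
    rw [harg, Nat.succ_eq_add_one]
    omega

theorem Q_mem_interval (P : ℕ) (hP : 1 ≤ P) (x : Fin P → ℕ) :
    mu P ((∑ i, (x i : ℤ)) - 1) ≤ Q P x ∧
    Q P x ≤ mu P (∑ i, (x i : ℤ)) - 1 := by
  induction P with
  | zero => omega
  | succ P ih =>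
    set s : ℤ := ∑ i, (x (i : Fin (P+1)) : ℤ) with hs
    have hs0 : 0 ≤ s := Finset.sum_nonneg fun i _ => Int.ofNat_nonneg _
    have hsplit : s = (∑ i : Fin P, (x i.castSucc : ℤ)) + x (Fin.last P) := by
      rw [hs, Fin.sum_univ_castSucc]
    have hs' : (∑ i : Fin P, (x i.castSucc : ℤ)) ≤ s := by
      have : (0:ℤ) ≤ x (Fin.last P) := Int.ofNat_nonneg _
      omega
    have hQ : Q (P + 1) x = mu (P + 1) (s - 1) + Q P (fun i => x i.castSucc) := rfl
    constructor
    · rw [hQ]; exact Nat.le_add_right _ _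
    · rw [hQ, mu_pascal P hs0]
      rcases Nat.eq_zero_or_pos P with h0 | h0
      · subst h0
        have : Q 0 (fun i => x i.castSucc) = 0 := rfl
        rw [this]
        have := mu_pos 0 hs0
        omega
      · obtain ⟨_, h2⟩ := ih h0 (fun i => x i.castSucc)
        have hm : mu P (∑ i : Fin P, ((x i.castSucc : ℕ) : ℤ)) ≤ mu P s := mu_mono P hs'
        have hp : 1 ≤ mu P (∑ i : Fin P, ((x i.castSucc : ℕ) : ℤ)) := by
          apply mu_pos
          exact Finset.sum_nonneg fun i _ => Int.ofNat_nonneg _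
        omega
end

section
/- For the single-player chain with M labels and lot size L, the matrix T with entries T_{j,k} = binomial(M,L)^{−1} binomial(M−k, j−k) binomial(k, L−j+k) (zero when these are undefined) satisfies T = E Λ E, where Λ is diagonal with Λ_{j,j} = binomial(j,L)/binomial(M,L) and E_{j,k} = binomial(M−k, M−j)(−1)^{M−j}, for indices j,k = 0,...,M−1. -/
private lemma key_sum (L : ℕ) : ∀ d k : ℕ,
    ∑ i ∈ Finset.range (d + 1), (-1 : ℝ) ^ i * (d.choose i) * ((k + i).choose L)
      = (-1 : ℝ) ^ d * (if d ≤ L then ((k.choose (L - d)) : ℝ) else 0) := by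
  intro d
  induction d with
  | zero => intro k; simp
  | succ d ih =>
    intro k
    have hA : ∀ i ∈ Finset.range (d + 1),
        (-1:ℝ)^(i+1) * (((d+1).choose (i+1) : ℕ) : ℝ) * (((k+(i+1)).choose L : ℕ) : ℝ)
        = -((-1:ℝ)^i * ((d.choose i : ℕ) : ℝ) * ((((k+1)+i).choose L : ℕ) : ℝ))
          - ((-1:ℝ)^i * ((d.choose (i+1) : ℕ) : ℝ) * ((((k+1)+i).choose L : ℕ) : ℝ)) := by
      intro i _
      have h : k + (i+1) = (k+1) + i := by omega
      rw [h, Nat.choose_succ_succ]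
      push_cast
      ring
    have hB : ∀ i ∈ Finset.range (d + 1),
        (-1:ℝ)^(i+1) * ((d.choose (i+1) : ℕ) : ℝ) * (((k+(i+1)).choose L : ℕ) : ℝ)
        = -((-1:ℝ)^i * ((d.choose (i+1) : ℕ) : ℝ) * ((((k+1)+i).choose L : ℕ) : ℝ)) := by
      intro i _
      have h : k + (i+1) = (k+1) + i := by omega
      rw [h]; ring
    have hD : ∑ i ∈ Finset.range (d + 1),
        ((-1:ℝ)^i * ((d.choose (i+1) : ℕ) : ℝ) * ((((k+1)+i).choose L : ℕ) : ℝ))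
        = ((k.choose L : ℕ) : ℝ)
          - ∑ i ∈ Finset.range (d + 1), (-1:ℝ)^i * ((d.choose i : ℕ) : ℝ) * (((k+i).choose L : ℕ) : ℝ) := by
      have h23 : ∑ i ∈ Finset.range (d + 2),
          (-1:ℝ)^i * ((d.choose i : ℕ) : ℝ) * (((k+i).choose L : ℕ) : ℝ)
          = (∑ i ∈ Finset.range (d + 1),
              (-1:ℝ)^(i+1) * ((d.choose (i+1) : ℕ) : ℝ) * (((k+(i+1)).choose L : ℕ) : ℝ))
            + (-1:ℝ)^0 * ((d.choose 0 : ℕ) : ℝ) * (((k+0).choose L : ℕ) : ℝ) :=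
        Finset.sum_range_succ' _ _
      rw [Finset.sum_range_succ, Finset.sum_congr rfl hB, Finset.sum_neg_distrib] at h23
      simp only [Nat.choose_succ_self, Nat.cast_zero, pow_zero, Nat.choose_zero_right,
        Nat.cast_one, one_mul, add_zero, mul_zero, zero_mul, mul_one] at h23
      linarith
    have hstep : ∑ i ∈ Finset.range (d + 1 + 1),
        (-1 : ℝ) ^ i * (((d+1).choose i : ℕ) : ℝ) * (((k + i).choose L : ℕ) : ℝ)
        = (∑ i ∈ Finset.range (d + 1), (-1 : ℝ) ^ i * ((d.choose i : ℕ) : ℝ) * (((k + i).choose L : ℕ) : ℝ))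
          - ∑ i ∈ Finset.range (d + 1), (-1 : ℝ) ^ i * ((d.choose i : ℕ) : ℝ) * ((((k+1) + i).choose L : ℕ) : ℝ) := by
      have h1 : ∑ i ∈ Finset.range (d + 2),
          (-1:ℝ)^i * (((d+1).choose i : ℕ) : ℝ) * (((k+i).choose L : ℕ) : ℝ)
          = (∑ i ∈ Finset.range (d + 1),
              (-1:ℝ)^(i+1) * (((d+1).choose (i+1) : ℕ) : ℝ) * (((k+(i+1)).choose L : ℕ) : ℝ))
            + (-1:ℝ)^0 * (((d+1).choose 0 : ℕ) : ℝ) * (((k+0).choose L : ℕ) : ℝ) :=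
        Finset.sum_range_succ' _ _
      rw [Finset.sum_congr rfl hA, Finset.sum_sub_distrib, Finset.sum_neg_distrib] at h1
      rw [hD] at h1
      simp only [pow_zero, Nat.choose_zero_right, Nat.cast_one, one_mul, add_zero] at h1
      rw [show d + 1 + 1 = d + 2 from rfl, h1]
      ring
    rw [hstep, ih k, ih (k+1)]
    by_cases h1 : d + 1 ≤ L
    · have h0 : d ≤ L := by omega
      simp only [if_pos h0, if_pos h1]
      have hs : L - d = (L - (d+1)) + 1 := by omega
      rw [hs, Nat.choose_succ_succ]
      push_cast
      ring
    · by_cases h0 : d ≤ L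
      · have hdL : d = L := by omega
        simp only [if_pos h0, if_neg h1]
        subst hdL
        simp
      · simp only [if_neg h0, if_neg h1]
        ring


private lemma neg_one_pow_congr' (a b n : ℕ) (h : a + b = 2 * n) :
    ((-1 : ℝ) ^ a) = (-1 : ℝ) ^ b := by
  have h1 : (-1 : ℝ) ^ a * (-1) ^ b = 1 := by
    rw [← pow_add, h, pow_mul]; norm_num
  have h2 : (-1 : ℝ) ^ b * (-1) ^ b = 1 := by
    rw [← pow_add, ← two_mul, pow_mul]; norm_num
  calc (-1 : ℝ) ^ a = (-1 : ℝ) ^ a * ((-1) ^ b * (-1) ^ b) := by rw [h2, mul_one]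
    _ = ((-1 : ℝ) ^ a * (-1) ^ b) * (-1) ^ b := by ring
    _ = (-1 : ℝ) ^ b := by rw [h1, one_mul]


theorem T_diagonalization (M L : ℕ) (hM : 1 ≤ M)
    (T E Λ : Matrix (Fin M) (Fin M) ℝ)
    (hT : ∀ j k : Fin M, T j k =
      if (k : ℕ) ≤ (j : ℕ) ∧ (j : ℕ) - (k : ℕ) ≤ L then
        ((M.choose L : ℝ))⁻¹ * ((M - (k : ℕ)).choose ((j : ℕ) - (k : ℕ)) : ℝ) *
          ((k : ℕ).choose (L - ((j : ℕ) - (k : ℕ))) : ℝ)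
      else 0)
    (hΛ : Λ = Matrix.diagonal fun j : Fin M => ((j : ℕ).choose L : ℝ) / (M.choose L : ℝ))
    (hE : ∀ j k : Fin M, E j k = ((M - (k : ℕ)).choose (M - (j : ℕ)) : ℝ) * (-1) ^ (M - (j : ℕ))) :
    T = E * Λ * E := by
  ext j k
  have hj : (j : ℕ) < M := j.isLt
  have hk : (k : ℕ) < M := k.isLt
  have hrange : (E * Λ * E) j k = ∑ m ∈ Finset.range M,
      (((M - m).choose (M - (j : ℕ)) : ℝ) * (-1) ^ (M - (j : ℕ)) *
        (((m.choose L : ℕ) : ℝ) / ((M.choose L : ℕ) : ℝ)) *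
        ((((M - (k : ℕ)).choose (M - m) : ℕ) : ℝ) * (-1) ^ (M - m))) := by
    rw [hΛ, Matrix.mul_apply]
    simp only [Matrix.mul_diagonal, hE]
    exact Fin.sum_univ_eq_sum_range (fun m =>
      (((M - m).choose (M - (j : ℕ)) : ℝ) * (-1) ^ (M - (j : ℕ)) *
        (((m.choose L : ℕ) : ℝ) / ((M.choose L : ℕ) : ℝ)) *
        ((((M - (k : ℕ)).choose (M - m) : ℕ) : ℝ) * (-1) ^ (M - m)))) M
  rw [hT, hrange]
  rcases lt_or_ge (j : ℕ) (k : ℕ) with hjk | hkj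
  · rw [if_neg (by omega)]
    symm
    apply Finset.sum_eq_zero
    intro m hm
    rw [Finset.mem_range] at hm
    rcases le_or_gt m (j : ℕ) with h | h
    · have h0 : (M - (k : ℕ)).choose (M - m) = 0 := Nat.choose_eq_zero_of_lt (by omega)
      rw [h0]; push_cast; ring
    · have h0 : (M - m).choose (M - (j : ℕ)) = 0 := Nat.choose_eq_zero_of_lt (by omega)
      rw [h0]; push_cast; ring
  · have hsub : Finset.Icc (k : ℕ) (j : ℕ) ⊆ Finset.range M := by
      intro m hm; rw [Finset.mem_Icc] at hm; rw [Finset.mem_range]; omega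
    rw [← Finset.sum_subset hsub (by
      intro m hm hnot
      rw [Finset.mem_range] at hm
      rw [Finset.mem_Icc] at hnot
      push_neg at hnot
      rcases lt_or_ge m (k : ℕ) with h | h
      · have h0 : (M - (k : ℕ)).choose (M - m) = 0 := Nat.choose_eq_zero_of_lt (by omega)
        rw [h0]; push_cast; ring
      · have h0 : (M - m).choose (M - (j : ℕ)) = 0 :=
          Nat.choose_eq_zero_of_lt (by omega)
        rw [h0]; push_cast; ring)]
    rw [← Finset.Ico_add_one_right_eq_Icc, Finset.sum_Ico_eq_sum_range]
    rw [show (j : ℕ) + 1 - (k : ℕ) = ((j : ℕ) - (k : ℕ)) + 1 from by omega]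
    have hterm : ∀ i ∈ Finset.range (((j : ℕ) - (k : ℕ)) + 1),
        (((M - ((k : ℕ) + i)).choose (M - (j : ℕ)) : ℝ) * (-1) ^ (M - (j : ℕ)) *
          (((((k : ℕ) + i).choose L : ℕ) : ℝ) / ((M.choose L : ℕ) : ℝ)) *
          ((((M - (k : ℕ)).choose (M - ((k : ℕ) + i)) : ℕ) : ℝ) * (-1) ^ (M - ((k : ℕ) + i))))
        = ((((M - (k : ℕ)).choose ((j : ℕ) - (k : ℕ)) : ℕ) : ℝ) * (-1) ^ ((j : ℕ) - (k : ℕ))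
            / ((M.choose L : ℕ) : ℝ)) *
          ((-1 : ℝ) ^ i * ((((j : ℕ) - (k : ℕ)).choose i : ℕ) : ℝ) *
            ((((k : ℕ) + i).choose L : ℕ) : ℝ)) := by
      intro i hi
      rw [Finset.mem_range] at hi
      have hi' : i ≤ (j : ℕ) - (k : ℕ) := by omega
      have e1 : (M - ((k : ℕ) + i)).choose (M - (j : ℕ))
          = (M - ((k : ℕ) + i)).choose (((j : ℕ) - (k : ℕ)) - i) := by
        rw [show M - (j : ℕ) = (M - ((k : ℕ) + i)) - (((j : ℕ) - (k : ℕ)) - i) from by omega]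
        exact Nat.choose_symm (by omega)
      have e2 : (M - (k : ℕ)).choose (M - ((k : ℕ) + i)) = (M - (k : ℕ)).choose i := by
        rw [show M - ((k : ℕ) + i) = (M - (k : ℕ)) - i from by omega]
        exact Nat.choose_symm (by omega)
      have e3 : (M - (k : ℕ)).choose ((j : ℕ) - (k : ℕ)) * ((j : ℕ) - (k : ℕ)).choose i
          = (M - (k : ℕ)).choose i * ((M - ((k : ℕ) + i)).choose (((j : ℕ) - (k : ℕ)) - i)) := by
        have h := Nat.choose_mul (n := M - (k : ℕ)) hi'
        rw [show (M - (k : ℕ)) - i = M - ((k : ℕ) + i) from by omega] at h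
        exact h
      have e3' : (((M - (k : ℕ)).choose ((j : ℕ) - (k : ℕ)) : ℕ) : ℝ) *
            ((((j : ℕ) - (k : ℕ)).choose i : ℕ) : ℝ)
          = (((M - (k : ℕ)).choose i : ℕ) : ℝ) *
            (((M - ((k : ℕ) + i)).choose (((j : ℕ) - (k : ℕ)) - i) : ℕ) : ℝ) := by
        exact_mod_cast congrArg (Nat.cast (R := ℝ)) e3
      have e4 : (-1 : ℝ) ^ (M - (j : ℕ)) * (-1) ^ (M - ((k : ℕ) + i))
          = (-1 : ℝ) ^ ((j : ℕ) - (k : ℕ)) * (-1) ^ i := by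
        calc (-1 : ℝ) ^ (M - (j : ℕ)) * (-1) ^ (M - ((k : ℕ) + i))
            = (-1 : ℝ) ^ ((M - (j : ℕ)) + (M - ((k : ℕ) + i))) := (pow_add _ _ _).symm
          _ = (-1 : ℝ) ^ (((j : ℕ) - (k : ℕ)) + i) :=
              neg_one_pow_congr' _ _ (M - (k : ℕ)) (by omega)
          _ = _ := pow_add _ _ _
      rw [e1, e2]
      linear_combination
        ((((M - ((k : ℕ) + i)).choose (((j : ℕ) - (k : ℕ)) - i) : ℕ) : ℝ) *
          (((M - (k : ℕ)).choose i : ℕ) : ℝ) * ((((k : ℕ) + i).choose L : ℕ) : ℝ)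
          / ((M.choose L : ℕ) : ℝ)) * e4
        - ((-1 : ℝ) ^ ((j : ℕ) - (k : ℕ)) * (-1) ^ i * ((((k : ℕ) + i).choose L : ℕ) : ℝ)
          / ((M.choose L : ℕ) : ℝ)) * e3'
    rw [Finset.sum_congr rfl hterm, ← Finset.mul_sum, key_sum L ((j : ℕ) - (k : ℕ)) (k : ℕ)]
    have hs2 : (-1 : ℝ) ^ ((j : ℕ) - (k : ℕ)) * (-1) ^ ((j : ℕ) - (k : ℕ)) = 1 := by
      rw [← pow_add, ← two_mul, pow_mul]; norm_num
    by_cases hdL : (j : ℕ) - (k : ℕ) ≤ L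
    · rw [if_pos ⟨hkj, hdL⟩, if_pos hdL]
      linear_combination
        (-((((M - (k : ℕ)).choose ((j : ℕ) - (k : ℕ)) : ℕ) : ℝ) *
          (((k : ℕ).choose (L - ((j : ℕ) - (k : ℕ))) : ℕ) : ℝ) / ((M.choose L : ℕ) : ℝ))) * hs2
    · rw [if_neg (by tauto), if_neg hdL]
      ring
end
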